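/- Let A be a finite set and let X ⊆ A^ℤ be an irreducible sofic subshift. Then there exists an integer n₀ ≥ 0 such that for every word u ∈ L(X) there exists a word c ∈ L(X) with |c| ≤ n₀ such that the periodic configuration (uc)^∞ belongs to X. -/

import Mathlib

/-- The shift action of `ℤ` on configurations `x : ℤ → A`: `(n • x)(m) = x(m - n)`. -/
def shiftZ {A : Type*} (n : ℤ) (x : ℤ → A) : ℤ → A :=
  fun m => x (m - n)

/-- A subshift is a closed, shift-invariant subset of `A^ℤ` (with the prodiscrete
topology). -/
def IsSubshiftZ {A : Type*} [TopologicalSpace A] (X : Set (ℤ → A)) : Prop :=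
  IsClosed X ∧ ∀ (n : ℤ) (x : ℤ → A), x ∈ X → shiftZ n x ∈ X

/-- A configuration is periodic if its orbit under the shift action is finite. -/
def IsPeriodicZ {A : Type*} (x : ℤ → A) : Prop :=
  (Set.range fun n : ℤ => shiftZ n x).Finite

/-- A subshift `X ⊆ A^ℤ` is strongly irreducible if there is a finite `Δ ⊆ ℤ` such
that whenever `Ω₁, Ω₂` are finite subsets of `ℤ` with `(Ω₁ - Δ) ∩ Ω₂ = ∅`, any two
configurations of `X` can be glued along `Ω₁` and `Ω₂` inside `X`. -/
def IsStronglyIrreducibleZ {A : Type*} (X : Set (ℤ → A)) : Prop :=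
  ∃ Δ : Finset ℤ, ∀ Ω₁ Ω₂ : Finset ℤ,
    (∀ a ∈ Ω₁, ∀ d ∈ Δ, a - d ∉ Ω₂) →
    ∀ x₁ ∈ X, ∀ x₂ ∈ X, ∃ x ∈ X,
      (∀ i ∈ Ω₁, x i = x₁ i) ∧ (∀ i ∈ Ω₂, x i = x₂ i)

/-- The word `w` appears as a subword of the configuration `x : ℤ → A`. -/
def AppearsIn {A : Type*} (w : List A) (x : ℤ → A) : Prop :=
  ∃ i : ℤ, ∀ k : Fin w.length, x (i + (k.1 : ℤ)) = w.get k

/-- The language of `X ⊆ A^ℤ`: all finite words appearing in configurations of `X`. -/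
def lang {A : Type*} (X : Set (ℤ → A)) : Set (List A) :=
  {w : List A | ∃ x ∈ X, AppearsIn w x}

/-- `X ⊆ A^ℤ` is irreducible if any two words of its language can be joined,
within the language, by some word. -/
def IrreducibleZ {A : Type*} (X : Set (ℤ → A)) : Prop :=
  ∀ u ∈ lang X, ∀ v ∈ lang X, ∃ w : List A, u ++ w ++ v ∈ lang X

/-- `X ⊆ A^ℤ` is a W-subshift if there is `n₀ ≥ 0` such that any two words of its
language can be joined, within the language, by a word of length at most `n₀`. -/
def IsWSubshift {A : Type*} (X : Set (ℤ → A)) : Prop :=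
  ∃ n₀ : ℕ, ∀ u ∈ lang X, ∀ v ∈ lang X,
    ∃ c ∈ lang X, c.length ≤ n₀ ∧ u ++ c ++ v ∈ lang X

/-- A subshift of `A^ℤ` is of finite type if it is defined by a finite window `Ω` and
a set of allowed patterns `P ⊆ A^Ω`. -/
def IsOfFiniteTypeZ {A : Type*} (X : Set (ℤ → A)) : Prop :=
  ∃ (Ω : Finset ℤ) (P : Set ({i : ℤ // i ∈ Ω} → A)),
    X = {x : ℤ → A | ∀ n : ℤ, (fun w : {i : ℤ // i ∈ Ω} => shiftZ n x w.1) ∈ P}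

/-- A subshift `X ⊆ A^ℤ` is sofic if it is the image of a subshift of finite type
`Y ⊆ B^ℤ` (over a finite alphabet `B`, with its prodiscrete topology) under a
surjective continuous shift-equivariant map. -/
def IsSoficZ {A : Type*} [TopologicalSpace A] (X : Set (ℤ → A)) : Prop :=
  ∃ (B : Type) (_ : Finite B) (Y : Set (ℤ → B)) (f : (ℤ → B) → (ℤ → A)),
    letI : TopologicalSpace B := ⊥
    IsSubshiftZ Y ∧ IsOfFiniteTypeZ Y ∧
      ContinuousOn f Y ∧ (∀ (n : ℤ), ∀ y ∈ Y, f (shiftZ n y) = shiftZ n (f y)) ∧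
      f '' Y = X

/-- The periodic configuration `w^∞ ∈ A^ℤ` obtained by repeating a nonempty word `w`
bi-infinitely. -/
def perConfig {A : Type*} (w : List A) (hw : w ≠ []) : ℤ → A := fun i =>
  w.get ⟨(i % (w.length : ℤ)).toNat, by
    have h0 : 0 < w.length := by
      cases w with
      | nil => exact absurd rfl hw
      | cons _ _ => simp
    have h1 : 0 ≤ i % (w.length : ℤ) :=
      Int.emod_nonneg _ (by exact_mod_cast h0.ne')
    have h2 : i % (w.length : ℤ) < (w.length : ℤ) :=
      Int.emod_lt_of_pos _ (by exact_mod_cast h0)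
    omega⟩

/-- If `X ⊆ A^ℤ` is an irreducible sofic subshift, then there is an integer `n₀ ≥ 0`
such that every word `u ∈ L(X)` can be completed, by a word `c ∈ L(X)` of length at
most `n₀`, to a (nonempty) word `uc` whose bi-infinite periodic repetition `(uc)^∞`
belongs to `X`. -/
lemma periodic_eq_emod {A : Type*} (x : ℤ → A) (L : ℤ) (hL : 0 < L)
    (hper : ∀ i, x (i + L) = x i) (i : ℤ) : x i = x (i % L) := by
  have key : ∀ k : ℤ, ∀ j : ℤ, x (j + k * L) = x j := by
    intro k
    induction k using Int.induction_on with
    | zero => simp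
    | succ k ih =>
      intro j
      have h1 : j + (k + 1 : ℤ) * L = (j + k * L) + L := by ring
      rw [h1, hper, ih]
    | pred k ih =>
      intro j
      have h1 : (j + (-(k:ℤ) - 1) * L) + L = j + (-(k:ℤ)) * L := by ring
      have := hper (j + (-(k:ℤ) - 1) * L)
      rw [h1] at this
      rw [← this, ih]
  have h2 : i % L + (i / L) * L = i := by
    have := Int.emod_add_mul_ediv i L; linarith [this]
  calc x i = x (i % L + (i / L) * L) := by rw [h2]
    _ = x (i % L) := key _ _


lemma exists_radius {B A : Type*} [TopologicalSpace B] [DiscreteTopology B] [Finite B]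
    [TopologicalSpace A] [DiscreteTopology A]
    (Y : Set (ℤ → B)) (hcl : IsClosed Y) (f : (ℤ → B) → (ℤ → A)) (hf : ContinuousOn f Y) :
    ∃ r : ℕ, ∀ y ∈ Y, ∀ z ∈ Y, (∀ i : ℤ, i.natAbs ≤ r → y i = z i) → f y 0 = f z 0 := by
  classical
  have pointwise : ∀ y ∈ Y, ∃ N : ℕ, ∀ z ∈ Y,
      (∀ i : ℤ, i.natAbs ≤ N → z i = y i) → f z 0 = f y 0 := by
    intro y hy
    have hg : ContinuousWithinAt (fun w => f w 0) Y y :=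
      ((continuous_apply (0 : ℤ)).continuousAt).comp_continuousWithinAt (hf y hy)
    have hmem : {w : ℤ → B | f w 0 = f y 0} ∈ nhdsWithin y Y := by
      have : ({f y 0} : Set A) ∈ nhds (f y 0) := (isOpen_discrete _).mem_nhds rfl
      exact hg this
    obtain ⟨U, hUo, hyU, hUsub⟩ := mem_nhdsWithin.mp hmem
    obtain ⟨I, V, hIV, hpi⟩ := (isOpen_pi_iff.mp hUo) y hyU
    refine ⟨I.sup Int.natAbs, fun z hz hagree => ?_⟩
    have hzU : z ∈ U := by
      apply hpi
      intro i hi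
      have : z i = y i := hagree i (Finset.le_sup hi)
      rw [this]
      exact (hIV i hi).2
    exact hUsub ⟨hzU, hz⟩
  choose! N hN using pointwise
  set V : (ℤ → B) → Set (ℤ → B) :=
    fun y => ⋂ i ∈ Finset.Icc (-(N y : ℤ)) (N y), {z : ℤ → B | z i = y i} with hV
  have hVopen : ∀ y, IsOpen (V y) := by
    intro y
    apply isOpen_biInter_finset
    intro i _
    have : {z : ℤ → B | z i = y i} = (fun z : ℤ → B => z i) ⁻¹' {y i} := rfl
    rw [this]
    exact (continuous_apply i).isOpen_preimage _ (isOpen_discrete ({y i} : Set B))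
  have hmemV : ∀ y z : ℤ → B, z ∈ V y ↔ ∀ i : ℤ, i.natAbs ≤ N y → z i = y i := by
    intro y z
    simp only [hV, Set.mem_iInter, Set.mem_setOf_eq, Finset.mem_Icc]
    constructor
    · intro h i hi; exact h i (by omega)
    · intro h i hi; exact h i (by omega)
  have hYcomp : IsCompact Y := by
    have : CompactSpace (ℤ → B) := by infer_instance
    exact hcl.isCompact
  obtain ⟨t, ht⟩ := hYcomp.elim_finite_subcover (fun y : Y => V y.1)
    (fun y => hVopen y.1)
    (by intro y hy
        exact Set.mem_iUnion.mpr ⟨⟨y, hy⟩, (hmemV y y).mpr (fun i _ => rfl)⟩)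
  refine ⟨t.sup (fun y => N y.1), fun y hy z hz hagree => ?_⟩
  obtain ⟨y₀, hy₀t, hyV⟩ := by
    have := ht hy
    simpa only [Set.mem_iUnion, exists_prop] using this
  have hyag := (hmemV y₀.1 y).mp hyV
  have h1 : f y 0 = f y₀.1 0 := hN y₀.1 y₀.2 y hy hyag
  have h2 : f z 0 = f y₀.1 0 := by
    apply hN y₀.1 y₀.2 z hz
    intro i hi
    rw [← hyag i hi]
    exact (hagree i (le_trans hi (Finset.le_sup (f := fun y : Y => N y.1) hy₀t))).symm
  rw [h1, h2]


section SFT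
variable {B : Type*} (Ω : Finset ℤ) (P : Set ({i : ℤ // i ∈ Ω} → B)) (K : ℕ)

lemma splice_good (hK : ∀ i ∈ Ω, i.natAbs ≤ K)
    (y z : ℤ → B)
    (hy : ∀ n : ℤ, (fun w : {i : ℤ // i ∈ Ω} => shiftZ n y w.1) ∈ P)
    (hz : ∀ n : ℤ, (fun w : {i : ℤ // i ∈ Ω} => shiftZ n z w.1) ∈ P)
    (s : ℤ) (hagree : ∀ i, s ≤ i → i < s + (2 * K + 1) → y i = z i) :
    (∀ n : ℤ, (fun w : {i : ℤ // i ∈ Ω} =>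
        shiftZ n (fun i => if i < s then y i else z i) w.1) ∈ P) ∧
    (∀ i : ℤ, i < s + (2 * K + 1) → (if i < s then y i else z i) = y i) ∧
    (∀ i : ℤ, s ≤ i → (if i < s then y i else z i) = z i) := by
  refine ⟨?_, ?_, ?_⟩
  · intro n
    by_cases hcase : (K : ℤ) - n < s + (2 * K + 1)
    · have : (fun w : {i : ℤ // i ∈ Ω} =>
          shiftZ n (fun i => if i < s then y i else z i) w.1)
          = (fun w : {i : ℤ // i ∈ Ω} => shiftZ n y w.1) := by
        funext w
        have hw := hK w.1 w.2
        show (if w.1 - n < s then y (w.1 - n) else z (w.1 - n)) = y (w.1 - n)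
        by_cases h : w.1 - n < s
        · simp [h]
        · rw [if_neg h]
          exact (hagree _ (by omega) (by omega)).symm
      rw [this]; exact hy n
    · have : (fun w : {i : ℤ // i ∈ Ω} =>
          shiftZ n (fun i => if i < s then y i else z i) w.1)
          = (fun w : {i : ℤ // i ∈ Ω} => shiftZ n z w.1) := by
        funext w
        have hw := hK w.1 w.2
        show (if w.1 - n < s then y (w.1 - n) else z (w.1 - n)) = z (w.1 - n)
        rw [if_neg (by omega)]
      rw [this]; exact hz n
  · intro i hi
    by_cases h : i < s
    · simp [h]
    · rw [if_neg h]; exact (hagree i (by omega) hi).symm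
  · intro i hi
    rw [if_neg (by omega)]

lemma periodize_good (hK : ∀ i ∈ Ω, i.natAbs ≤ K)
    (y : ℤ → B)
    (hy : ∀ n : ℤ, (fun w : {i : ℤ // i ∈ Ω} => shiftZ n y w.1) ∈ P)
    (a L : ℤ) (hL : 1 ≤ L)
    (hper : ∀ i, a ≤ i → i < a + (2 * K + 1) → y (i + L) = y i) :
    (∀ n : ℤ, (fun w : {i : ℤ // i ∈ Ω} =>
        shiftZ n (fun i => y (a + (i - a) % L)) w.1) ∈ P) ∧
    (∀ i : ℤ, y (a + (i + L - a) % L) = y (a + (i - a) % L)) ∧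
    (∀ i : ℤ, a ≤ i → i < a + L + (2 * K + 1) → y (a + (i - a) % L) = y i) := by
  have hL0 : L ≠ 0 := by omega
  have key : ∀ nq : ℕ, ∀ q : ℤ, q.toNat = nq → 0 ≤ q → q < L + (2 * K + 1) →
      y (a + q) = y (a + q % L) := by
    intro nq
    induction nq using Nat.strong_induction_on with
    | _ nq ih =>
      intro q hq h0 hlt
      by_cases hcase : q < L
      · rw [Int.emod_eq_of_lt h0 hcase]
      · have h2 : y (a + q) = y (a + (q - L)) := by
          have := hper (a + (q - L)) (by omega) (by omega)
          rw [show a + (q - L) + L = a + q by ring] at this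
          exact this
        rw [h2, ih (q - L).toNat (by omega) _ rfl (by omega) (by omega)]
        congr 1
        have : q - L = q + L * (-1) := by ring
        rw [this, Int.add_mul_emod_self_left]
  have hperio : ∀ i : ℤ, y (a + (i + L - a) % L) = y (a + (i - a) % L) := by
    intro i
    congr 1
    have : i + L - a = (i - a) + L * 1 := by ring
    rw [this, Int.add_mul_emod_self_left]
  have heqy : ∀ i : ℤ, a ≤ i → i < a + L + (2 * K + 1) → y (a + (i - a) % L) = y i := by
    intro i h1 h2
    rw [← key (i - a).toNat (i - a) rfl (by omega) (by omega)]
    congr 1; ring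
  refine ⟨?_, hperio, heqy⟩
  intro n
  -- choose k with window shifted into [a, a + L + 2K]
  set c : ℤ := -(K : ℤ) - n with hc
  set tt : ℤ := (a - c) % L with htt
  set qq : ℤ := (a - c) / L with hqq
  have hdm : L * qq + tt = a - c := Int.mul_ediv_add_emod (a - c) L
  have htt0 : 0 ≤ tt := Int.emod_nonneg _ hL0
  have httL : tt < L := Int.emod_lt_of_pos _ (by omega)
  set k : ℤ := if tt = 0 then qq else qq + 1 with hk
  have hk1 : a ≤ c + k * L ∧ c + k * L ≤ a + L := by
    by_cases h : tt = 0
    · rw [hk, if_pos h]; constructor <;> nlinarith [hdm]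
    · rw [hk, if_neg h]; constructor <;> nlinarith [hdm]
  have heq : (fun w : {i : ℤ // i ∈ Ω} =>
      shiftZ n (fun i => y (a + (i - a) % L)) w.1)
      = (fun w : {i : ℤ // i ∈ Ω} => shiftZ (n - k * L) y w.1) := by
    funext w
    have hw := hK w.1 w.2
    show y (a + (w.1 - n - a) % L) = y (w.1 - (n - k * L))
    have e1 : (w.1 - n - a) % L = (w.1 - n + k * L - a) % L := by
      have : w.1 - n + k * L - a = (w.1 - n - a) + L * k := by ring
      rw [this, Int.add_mul_emod_self_left]
    rw [e1, heqy (w.1 - n + k * L) (by omega) (by omega)]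
    congr 1; ring
  rw [heq]; exact hy (n - k * L)

end SFT


lemma appearsIn_iff {A : Type*} (w : List A) (x : ℤ → A) :
    AppearsIn w x ↔ ∃ i : ℤ, ∀ jj : ℕ, (h : jj < w.length) → x (i + (jj : ℤ)) = w[jj] := by
  constructor
  · rintro ⟨i, hi⟩
    exact ⟨i, fun jj h => hi ⟨jj, h⟩⟩
  · rintro ⟨i, hi⟩
    exact ⟨i, fun k => hi k.1 k.2⟩

lemma ofFn_mem_lang {A : Type*} {X : Set (ℤ → A)} {x : ℤ → A} (hx : x ∈ X)
    (M : ℕ) (i0 : ℤ) : List.ofFn (fun j : Fin M => x (i0 + (j.1 : ℤ))) ∈ lang X := by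
  refine ⟨x, hx, (appearsIn_iff _ _).mpr ⟨i0, fun jj h => ?_⟩⟩
  rw [List.getElem_ofFn]

lemma occ_iter {A : Type*} (X : Set (ℤ → A)) (hirr : IrreducibleZ X)
    (u : List A) (hu : u ∈ lang X) (hn : 1 ≤ u.length) :
    ∀ N : ℕ, ∃ x ∈ X, ∃ p : ℕ → ℤ,
      (∀ k : ℕ, p k + u.length ≤ p (k + 1)) ∧
      (∀ k : ℕ, k ≤ N → ∀ jj : ℕ, (h : jj < u.length) → x (p k + (jj : ℤ)) = u[jj]) := by
  set n : ℕ := u.length with hnn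
  intro N
  induction N with
  | zero =>
    obtain ⟨x, hx, hap⟩ := hu
    obtain ⟨i, hi⟩ := (appearsIn_iff _ _).mp hap
    refine ⟨x, hx, fun k => i + k * n, fun k => by push_cast; linarith, ?_⟩
    intro k hk jj h
    interval_cases k
    simpa using hi jj h
  | succ N ihN =>
    obtain ⟨x, hx, p, hgap, hocc⟩ := ihN
    have hmono : ∀ k l : ℕ, k ≤ l → p k ≤ p l := by
      intro k l hkl
      induction l with
      | zero => have : k = 0 := by omega
                rw [this]
      | succ l ihl =>
        rcases Nat.lt_or_ge k (l+1) with h | h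
        · have := hgap l
          have := ihl (by omega)
          omega
        · have : k = l + 1 := by omega
          rw [this]
    set M : ℕ := (p N + n - p 0).toNat with hM
    have hM0 : (M : ℤ) = p N + n - p 0 := by
      have h1 : p 0 ≤ p N := hmono 0 N (by omega)
      omega
    set w : List A := List.ofFn (fun j : Fin M => x (p 0 + (j.1 : ℤ))) with hw
    have hwlen : w.length = M := by rw [hw, List.length_ofFn]
    have hwval : ∀ jj : ℕ, (h : jj < M) → w[jj]'(by omega) = x (p 0 + (jj : ℤ)) := by
      intro jj h
      show (List.ofFn fun j : Fin M => x (p 0 + (j.1 : ℤ)))[jj]'(by simpa using h) = _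
      rw [List.getElem_ofFn]
    have hwl : w ∈ lang X := ofFn_mem_lang hx M (p 0)
    obtain ⟨d, hd⟩ := hirr w hwl u hu
    obtain ⟨x', hx', hap'⟩ := hd
    obtain ⟨i, hi⟩ := (appearsIn_iff _ _).mp hap'
    have hlen : (w ++ d ++ u).length = M + d.length + n := by
      simp only [List.length_append, hwlen, hnn]
    -- occurrences of u in x' at i + (p k - p 0) for k ≤ N, and at i + M + d.length
    refine ⟨x', hx', fun k => if k ≤ N then i + (p k - p 0)
      else i + (M : ℤ) + d.length + ((k : ℤ) - N - 1) * n, ?_, ?_⟩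
    · intro k
      beta_reduce
      rcases Nat.lt_or_ge k N with hk | hk
      · rw [if_pos (by omega), if_pos (by omega)]
        have := hgap k
        omega
      · rcases Nat.eq_or_lt_of_le hk with hk' | hk'
        · subst hk'
          rw [if_pos le_rfl, if_neg (by omega)]
          have h1 : p 0 ≤ p N := hmono 0 N (by omega)
          push_cast
          have he0 : ((N : ℤ) + 1 - N - 1) * n = 0 := by ring
          rw [he0]
          omega
        · rw [if_neg (by omega), if_neg (by omega)]
          have h2 : ((k : ℤ) + 1 - N - 1) * n = ((k : ℤ) - N - 1) * n + n := by ring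
          push_cast
          rw [h2]
          omega
    · intro k hk jj h
      beta_reduce
      rcases Nat.lt_or_ge N k with hk' | hk'
      · -- k = N + 1, the new occurrence
        have hkeq : k = N + 1 := by omega
        rw [if_neg (by omega)]
        have hidx : M + d.length + jj < (w ++ d ++ u).length := by omega
        have := hi (M + d.length + jj) (by omega)
        have hgeq : (w ++ d ++ u)[M + d.length + jj]'(by omega) = u[jj] := by
          have hwd : (w ++ d).length ≤ M + d.length + jj := by simp [hwlen]
          rw [List.getElem_append_right hwd]
          congr 1
          simp [hwlen]
        rw [hgeq] at this
        rw [← this]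
        congr 1
        subst hkeq
        push_cast
        have : ((N : ℤ) + 1 - N - 1) * n = 0 := by ring
        rw [this]
        ring
      · -- old occurrences
        rw [if_pos (by omega)]
        have h0k : p 0 ≤ p k := hmono 0 k (by omega)
        have hkN : p k ≤ p N := hmono k N (by omega)
        set e : ℕ := (p k - p 0 + jj).toNat with he
        have heZ : (e : ℤ) = p k - p 0 + jj := by omega
        have heM : e < M := by omega
        have := hi e (by omega)
        have hgeq : (w ++ d ++ u)[e]'(by omega) = w[e]'(by omega) := by
          rw [List.getElem_append_left (by simp [hwlen]; omega),
              List.getElem_append_left (by omega)]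
        rw [hgeq, hwval e heM] at this
        have hxval : x (p 0 + (e : ℤ)) = u[jj] := by
          rw [heZ, show p 0 + (p k - p 0 + jj) = p k + jj by ring]
          exact hocc k (by omega) jj h
        rw [hxval] at this
        rw [← this]
        congr 1
        omega


lemma perConfig_apply_of_lt {A : Type*} (w : List A) (h : w ≠ []) (i : ℤ) (h0 : 0 ≤ i)
    (hlt : i < (w.length : ℤ)) (hn : i.toNat < w.length) : perConfig w h i = w[i.toNat] := by
  unfold perConfig
  rw [List.get_eq_getElem]
  congr 1
  show (i % (w.length : ℤ)).toNat = i.toNat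
  rw [Int.emod_eq_of_lt h0 hlt]

lemma perConfig_appearsIn {A : Type*} (w : List A) (h : w ≠ []) :
    AppearsIn w (perConfig w h) := by
  refine ⟨0, fun k => ?_⟩
  rw [show (0:ℤ) + (k.1 : ℤ) = (k.1 : ℤ) by ring]
  rw [perConfig_apply_of_lt w h k.1 (by positivity) (by exact_mod_cast k.2) (by simpa using k.2)]
  rw [List.get_eq_getElem]
  congr 1

private def stB {B : Type*} (m : ℕ) (y : ℤ → B) (t : ℤ) : Fin m → B :=
  fun j => y (t + (j.1 : ℤ))

theorem irreducible_sofic_periodic_completion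
    {A : Type*} [Finite A] [TopologicalSpace A] [DiscreteTopology A]
    (X : Set (ℤ → A)) (hX : IsSubshiftZ X) (hirr : IrreducibleZ X)
    (hsofic : IsSoficZ X) :
    ∃ n₀ : ℕ, ∀ u ∈ lang X, ∃ c ∈ lang X, c.length ≤ n₀ ∧
      ∃ h : u ++ c ≠ [], perConfig (u ++ c) h ∈ X := by
  classical
  obtain ⟨B, hBfin, Y, f, hYsub, hYft, hfc, hfeq, hfim⟩ := hsofic
  letI : TopologicalSpace B := ⊥
  haveI : DiscreteTopology B := discreteTopology_bot B
  haveI : Finite B := hBfin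
  letI : Fintype B := Fintype.ofFinite B
  obtain ⟨Ω, P, hYeq⟩ := hYft
  obtain ⟨r, hr⟩ := exists_radius Y hYsub.1 f hfc
  set K : ℕ := Ω.sup (fun i => i.natAbs) with hKdef
  have hK : ∀ i ∈ Ω, i.natAbs ≤ K := fun i hi => Finset.le_sup hi
  set m : ℕ := 2 * K + 1 with hmdef
  have hYmem : ∀ y : ℤ → B, y ∈ Y ↔ ∀ n : ℤ,
      (fun w : {i : ℤ // i ∈ Ω} => shiftZ n y w.1) ∈ P := by
    intro y; rw [hYeq]; exact Iff.rfl
  -- locality of f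
  have hloc : ∀ j : ℤ, ∀ y ∈ Y, ∀ z ∈ Y,
      (∀ i : ℤ, j - r ≤ i → i ≤ j + r → y i = z i) → f y j = f z j := by
    intro j y hy z hz hagree
    have h1 : f (shiftZ (-j) y) 0 = f (shiftZ (-j) z) 0 := by
      apply hr _ (hYsub.2 _ _ hy) _ (hYsub.2 _ _ hz)
      intro i hi
      show y (i - (-j)) = z (i - (-j))
      exact hagree (i - (-j)) (by omega) (by omega)
    rw [hfeq (-j) y hy, hfeq (-j) z hz] at h1
    have e1 : (shiftZ (-j) (f y)) 0 = f y j := by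
      show f y (0 - (-j)) = f y j; norm_num
    have e2 : (shiftZ (-j) (f z)) 0 = f z j := by
      show f z (0 - (-j)) = f z j; norm_num
    rw [e1, e2] at h1; exact h1
  -- reachability relation and uniform bound C
  set Rt : ((Fin m → B) × (Fin m → B)) → ℕ → Prop :=
    fun q t => ∃ z ∈ Y, stB m z 0 = q.1 ∧ stB m z (t : ℤ) = q.2 with hRtdef
  set C : ℕ := Finset.univ.sup
    (fun q : (Fin m → B) × (Fin m → B) =>
      if h : ∃ t, Rt q t then Nat.find h else 0) with hCdef
  have hCspec : ∀ q, (∃ t, Rt q t) → ∃ t, t ≤ C ∧ Rt q t := by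
    intro q hq
    refine ⟨Nat.find hq, ?_, Nat.find_spec hq⟩
    have h1 : (if h : ∃ t, Rt q t then Nat.find h else 0) = Nat.find hq := dif_pos hq
    have h2 := Finset.le_sup (f := fun q : (Fin m → B) × (Fin m → B) =>
      if h : ∃ t, Rt q t then Nat.find h else 0) (Finset.mem_univ q)
    simp only [h1] at h2
    exact h2
  -- main claim for nonempty words
  have main : ∀ u ∈ lang X, 1 ≤ u.length → ∃ c ∈ lang X,
      c.length ≤ 2 * r + m + C ∧
      ∃ h : u ++ c ≠ [], perConfig (u ++ c) h ∈ X := by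
    intro u hu hn
    -- rename target word to cw internally
    set NN : ℕ := (Fintype.card ((Fin m → B) × (Fin m → B))) * (u.length + 2 * r + m)
      with hNNdef
    obtain ⟨x, hxX, p, hgap, hocc⟩ := occ_iter X hirr u hu hn NN
    have hmono : ∀ k s : ℕ, p k + (s : ℤ) * u.length ≤ p (k + s) := by
      intro k s
      induction s with
      | zero => simp
      | succ s ih =>
        have h1 := hgap (k + s)
        have h2 : k + (s + 1) = (k + s) + 1 := rfl
        rw [h2]
        push_cast
        push_cast at ih
        linarith
    obtain ⟨y₀, hy₀Y, hy₀⟩ : ∃ y₀ ∈ Y, f y₀ = x := by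
      rw [← hfim] at hxX
      obtain ⟨y₀, h1, h2⟩ := hxX
      exact ⟨y₀, h1, h2⟩
    set cQ : ℕ := Fintype.card ((Fin m → B) × (Fin m → B)) with hcQdef
    obtain ⟨j, j', hjne, hFeq⟩ := Fintype.exists_ne_map_eq_of_card_lt
      (fun j : Fin (cQ + 1) =>
        ((stB m y₀ (p (j.1 * (u.length + 2 * r + m)) - r - m),
          stB m y₀ (p (j.1 * (u.length + 2 * r + m)) + u.length + r)) :
          (Fin m → B) × (Fin m → B)))
      (by rw [Fintype.card_fin]; omega)
    have hpair : ∃ k l : ℕ, k ≤ NN ∧ l ≤ NN ∧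
        p k + ((u.length : ℤ) + 2 * r + m) ≤ p l ∧
        stB m y₀ (p k - r - m) = stB m y₀ (p l - r - m) ∧
        stB m y₀ (p k + u.length + r) = stB m y₀ (p l + u.length + r) := by
      have keylt : ∀ a b : Fin (cQ + 1), a.1 < b.1 →
          p (a.1 * (u.length + 2 * r + m)) + ((u.length:ℤ) + 2 * r + m)
            ≤ p (b.1 * (u.length + 2 * r + m)) := by
        intro a b hab
        set Δ : ℕ := u.length + 2 * r + m with hΔdef
        have h1 : b.1 * Δ = a.1 * Δ + (b.1 - a.1) * Δ := by
          rw [← Nat.add_mul]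
          congr 1
          omega
        have h2 := hmono (a.1 * Δ) ((b.1 - a.1) * Δ)
        rw [← h1] at h2
        have hul : (1:ℤ) ≤ (u.length:ℤ) := by exact_mod_cast hn
        have h4 : Δ ≤ (b.1 - a.1) * Δ := Nat.le_mul_of_pos_left Δ (by omega)
        have h5 : ((Δ : ℕ) : ℤ) ≤ (((b.1 - a.1) * Δ : ℕ) : ℤ) := by exact_mod_cast h4
        have h6 : (((b.1 - a.1) * Δ : ℕ) : ℤ) ≤ (((b.1 - a.1) * Δ : ℕ) : ℤ) * (u.length:ℤ) :=
          le_mul_of_one_le_right (by positivity) hul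
        have h7 : ((Δ : ℕ) : ℤ) = (u.length:ℤ) + 2 * r + m := by
          rw [hΔdef]; push_cast; ring
        rw [h7] at h5
        linarith
      have hbnd : ∀ a : Fin (cQ + 1), a.1 * (u.length + 2 * r + m) ≤ NN := by
        intro a
        rw [hNNdef]
        exact Nat.mul_le_mul_right _ (by omega)
      rcases Nat.lt_trichotomy j.1 j'.1 with hlt | heq | hgt
      · refine ⟨j.1 * (u.length + 2*r+m), j'.1 * (u.length + 2*r+m),
          hbnd j, hbnd j', keylt j j' hlt, ?_, ?_⟩
        · exact congrArg Prod.fst hFeq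
        · exact congrArg Prod.snd hFeq
      · exact absurd (Fin.val_injective heq) hjne
      · refine ⟨j'.1 * (u.length + 2*r+m), j.1 * (u.length + 2*r+m),
          hbnd j', hbnd j, keylt j' j hgt, ?_, ?_⟩
        · exact congrArg Prod.fst hFeq.symm
        · exact congrArg Prod.snd hFeq.symm
    obtain ⟨k, l, hkN, hlN, hΔle, hα, hβ⟩ := hpair
    set α := stB m y₀ (p k - r - m) with hαdef
    set β := stB m y₀ (p k + u.length + r) with hβdef
    have hRt0 : ∃ t, Rt (β, α) t := by
      set t₀ : ℤ := p l - p k - ((u.length : ℤ) + 2*r + m) with ht₀def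
      have ht₀0 : 0 ≤ t₀ := by omega
      have ht₀c : ((t₀.toNat : ℕ) : ℤ) = t₀ := by omega
      refine ⟨t₀.toNat, shiftZ (-(p k + u.length + r)) y₀, hYsub.2 _ _ hy₀Y, ?_, ?_⟩
      · funext jf
        show y₀ ((0 + (jf.1:ℤ)) - (-(p k + u.length + r))) = y₀ (p k + u.length + r + jf.1)
        congr 1
        ring
      · funext jf
        show y₀ (((t₀.toNat : ℤ) + (jf.1:ℤ)) - (-(p k + u.length + r)))
          = y₀ (p k - r - m + jf.1)
        have h1 := congrFun hα jf
        have h2 : y₀ (p l - r - m + jf.1) = y₀ (p k - r - m + jf.1) := h1.symm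
        rw [← h2]
        congr 1
        rw [ht₀c, ht₀def]
        ring
    obtain ⟨t, htC, z, hzY, hz0, hzt⟩ : ∃ t, t ≤ C ∧ ∃ z ∈ Y,
        stB m z 0 = β ∧ stB m z (t : ℤ) = α := by
      obtain ⟨t, htC, hRtt⟩ := hCspec (β, α) hRt0
      exact ⟨t, htC, hRtt⟩
    set y₁ : ℤ → B := shiftZ (-(p k)) y₀ with hy₁def
    have hy₁Y : y₁ ∈ Y := hYsub.2 _ _ hy₀Y
    set z₁ : ℤ → B := shiftZ ((u.length : ℤ) + r) z with hz₁def
    have hz₁Y : z₁ ∈ Y := hYsub.2 _ _ hzY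
    have hy₁u : ∀ jj : ℕ, jj < u.length → ∀ hjj : jj < u.length,
        f y₁ (jj : ℤ) = u[jj] := by
      intro jj h hjj
      have h1 : f y₁ = shiftZ (-(p k)) (f y₀) := hfeq _ _ hy₀Y
      rw [hy₁def, h1, hy₀]
      show x ((jj : ℤ) - (-(p k))) = u[jj]
      rw [show (jj:ℤ) - (-(p k)) = p k + jj by ring]
      exact hocc k hkN jj h
    have hy₁a : ∀ jf : Fin m, y₁ (-(r:ℤ) - m + jf.1) = α jf := by
      intro jf
      show y₀ ((-(r:ℤ) - m + jf.1) - (-(p k))) = y₀ (p k - r - m + jf.1)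
      congr 1
      ring
    have hy₁b : ∀ jf : Fin m, y₁ ((u.length:ℤ) + r + jf.1) = β jf := by
      intro jf
      show y₀ (((u.length:ℤ) + r + jf.1) - (-(p k))) = y₀ (p k + u.length + r + jf.1)
      congr 1
      ring
    have hz₁b : ∀ jf : Fin m, z₁ ((u.length:ℤ) + r + jf.1) = β jf := by
      intro jf
      have h1 := congrFun hz0 jf
      rw [← h1]
      show z (((u.length:ℤ) + r + jf.1) - ((u.length:ℤ) + r)) = z (0 + jf.1)
      congr 1
      ring
    have hz₁a : ∀ jf : Fin m, z₁ ((u.length:ℤ) + r + t + jf.1) = α jf := by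
      intro jf
      have h1 := congrFun hzt jf
      rw [← h1]
      show z (((u.length:ℤ) + r + t + jf.1) - ((u.length:ℤ) + r)) = z ((t:ℤ) + jf.1)
      congr 1
      ring
    have hagree : ∀ i : ℤ, (u.length:ℤ) + r ≤ i → i < (u.length:ℤ) + r + (2*K+1) →
        y₁ i = z₁ i := by
      intro i h1 h2
      have hjn : ((i - ((u.length:ℤ) + r)).toNat) < m := by omega
      have hjf1 : (((⟨(i - ((u.length:ℤ) + r)).toNat, hjn⟩ : Fin m).1 : ℤ))
          = i - ((u.length:ℤ) + r) := by
        show (((i - ((u.length:ℤ) + r)).toNat : ℕ) : ℤ) = _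
        omega
      have hi : i = (u.length:ℤ) + r + ((⟨(i - ((u.length:ℤ) + r)).toNat, hjn⟩ : Fin m).1 : ℤ) := by
        omega
      rw [hi, hy₁b _, hz₁b _]
    obtain ⟨hwGood, hwy, hwz⟩ := splice_good Ω P K hK y₁ z₁
      ((hYmem y₁).mp hy₁Y) ((hYmem z₁).mp hz₁Y) ((u.length:ℤ) + r) hagree
    set w : ℤ → B := fun i => if i < (u.length:ℤ) + r then y₁ i else z₁ i with hwdef
    set Lp : ℕ := u.length + 2*r + m + t with hLpdef
    have hLpc : (Lp:ℤ) = (u.length:ℤ) + 2*r + m + t := by rw [hLpdef]; push_cast; ring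
    have hper : ∀ i : ℤ, -(r:ℤ) - m ≤ i → i < -(r:ℤ) - m + (2*K+1) →
        w (i + (Lp:ℤ)) = w i := by
      intro i h1 h2
      have hjn : ((i - (-(r:ℤ) - m)).toNat) < m := by omega
      set jf : Fin m := ⟨(i - (-(r:ℤ) - m)).toNat, hjn⟩ with hjfdef
      have hjf1 : (jf.1 : ℤ) = i + r + m := by
        rw [hjfdef]
        show (((i - (-(r:ℤ) - m)).toNat : ℕ) : ℤ) = _
        omega
      have hwi : w i = α jf := by
        show (if i < (u.length:ℤ) + r then y₁ i else z₁ i) = α jf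
        rw [if_pos (by omega)]
        rw [show i = -(r:ℤ) - m + jf.1 by omega]
        exact hy₁a jf
      have hwi2 : w (i + (Lp:ℤ)) = α jf := by
        show (if i + (Lp:ℤ) < (u.length:ℤ) + r then y₁ (i + (Lp:ℤ)) else z₁ (i + (Lp:ℤ))) = α jf
        rw [if_neg (by omega)]
        rw [show i + (Lp:ℤ) = (u.length:ℤ) + r + t + jf.1 by omega]
        exact hz₁a jf
      rw [hwi, hwi2]
    obtain ⟨hpGood, hpPer, hpEq⟩ := periodize_good Ω P K hK w hwGood (-(r:ℤ) - m) (Lp:ℤ)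
      (by omega) hper
    set y' : ℤ → B := fun i => w ((-(r:ℤ) - m) + (i - (-(r:ℤ) - m)) % (Lp:ℤ)) with hy'def
    have hy'Y : y' ∈ Y := (hYmem y').mpr hpGood
    have hy'per : ∀ i : ℤ, y' (i + (Lp:ℤ)) = y' i := fun i => hpPer i
    have hy'eq : ∀ i : ℤ, -(r:ℤ) - m ≤ i → i < -(r:ℤ) - m + (Lp:ℤ) + (2*K+1) →
        y' i = w i := fun i h1 h2 => hpEq i h1 h2
    have hx'X : f y' ∈ X := by
      rw [← hfim]
      exact ⟨y', hy'Y, rfl⟩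
    have hx'per : ∀ i : ℤ, f y' (i + (Lp:ℤ)) = f y' i := by
      have h1 : shiftZ (Lp:ℤ) y' = y' := by
        funext i
        show y' (i - (Lp:ℤ)) = y' i
        rw [← hy'per (i - (Lp:ℤ))]
        congr 1
        ring
      have h2 := hfeq (Lp:ℤ) y' hy'Y
      rw [h1] at h2
      intro i
      calc f y' (i + (Lp:ℤ)) = shiftZ (Lp:ℤ) (f y') (i + (Lp:ℤ)) := by rw [← h2]
        _ = f y' ((i + (Lp:ℤ)) - (Lp:ℤ)) := rfl
        _ = f y' i := by congr 1; ring
    have hx'u : ∀ jj : ℕ, jj < u.length → ∀ hjj : jj < u.length,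
        f y' (jj:ℤ) = u[jj] := by
      intro jj h hjj
      have h1 : f y' (jj:ℤ) = f y₁ (jj:ℤ) := by
        apply hloc _ _ hy'Y _ hy₁Y
        intro i hi1 hi2
        have e1 : y' i = w i := hy'eq i (by omega) (by omega)
        have e2 : w i = y₁ i := hwy i (by omega)
        rw [e1, e2]
      rw [h1]
      exact hy₁u jj h h
    set cl : ℕ := 2*r + m + t with hcldef
    set cw : List A := List.ofFn (fun jf : Fin cl => f y' ((u.length : ℤ) + jf.1)) with hcdef
    have hcmem : cw ∈ lang X := ofFn_mem_lang hx'X cl (u.length : ℤ)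
    have hclen : cw.length = cl := by rw [hcdef, List.length_ofFn]
    have hcval : ∀ ii : ℕ, ∀ hii : ii < cw.length, cw[ii]
        = f y' ((u.length:ℤ) + ii) := by
      intro ii hii
      have hii' : ii < cl := by omega
      show (List.ofFn (fun jf : Fin cl => f y' ((u.length : ℤ) + jf.1)))[ii]'(by simpa using hii')
        = _
      rw [List.getElem_ofFn]
    have hlenuc : (u ++ cw).length = Lp := by
      rw [List.length_append, hclen, hcldef, hLpdef]
      omega
    have hne : u ++ cw ≠ [] := by
      intro hnil
      have h1 := congrArg List.length hnil
      rw [hlenuc] at h1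
      simp at h1
      omega
    have hvals : ∀ jj : ℕ, jj < Lp → ∀ h2 : jj < (u ++ cw).length,
        (u ++ cw)[jj] = f y' (jj:ℤ) := by
      intro jj hjj h2
      by_cases hj : jj < u.length
      · rw [List.getElem_append_left hj]
        exact (hx'u jj hj hj).symm
      · have hj' : u.length ≤ jj := by omega
        rw [List.getElem_append_right hj']
        rw [hcval (jj - u.length) (by omega)]
        congr 1
        omega
    have hLppos : (0:ℤ) < (Lp:ℤ) := by omega
    have hperx : perConfig (u ++ cw) hne = f y' := by
      funext i
      show (u ++ cw).get _ = f y' i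
      rw [List.get_eq_getElem]
      have hlen' : ((u ++ cw).length : ℤ) = (Lp : ℤ) := by exact_mod_cast hlenuc
      have h0 : 0 ≤ i % ((u ++ cw).length : ℤ) := Int.emod_nonneg _ (by omega)
      have h1 : i % ((u ++ cw).length : ℤ) < (Lp:ℤ) := by
        rw [hlen']
        exact Int.emod_lt_of_pos _ hLppos
      have hidx : ((i % ((u ++ cw).length : ℤ)).toNat) < Lp := by omega
      rw [hvals ((i % ((u ++ cw).length : ℤ)).toNat) hidx (by omega)]
      have h4 : (((i % ((u ++ cw).length : ℤ)).toNat : ℕ) : ℤ) = i % (Lp:ℤ) := by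
        rw [← hlen']
        omega
      rw [h4]
      exact (periodic_eq_emod (f y') (Lp:ℤ) hLppos hx'per i).symm
    refine ⟨cw, hcmem, ?_, hne, ?_⟩
    · rw [hclen, hcldef]
      omega
    · rw [hperx]
      exact hx'X
  refine ⟨2 * r + m + C + 1, fun u hu => ?_⟩
  by_cases hue : 1 ≤ u.length
  · obtain ⟨c, hc1, hc2, h, hmem⟩ := main u hu hue
    exact ⟨c, hc1, by omega, h, hmem⟩
  · have hu0 : u = [] := by
      cases u with
      | nil => rfl
      | cons a l => simp at hue
    obtain ⟨x, hx, -⟩ := hu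
    have h1 : [x 0] ∈ lang X := by
      refine ⟨x, hx, (appearsIn_iff _ _).mpr ⟨0, fun jj h => ?_⟩⟩
      have hj0 : jj = 0 := by simpa using h
      subst hj0
      simp
    obtain ⟨c', hc'1, hc'2, h', hmem'⟩ := main [x 0] h1 (by simp)
    subst hu0
    refine ⟨[x 0] ++ c', ?_, by simp; omega, h', hmem'⟩
    exact ⟨perConfig ([x 0] ++ c') h', hmem', perConfig_appearsIn _ h'⟩
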